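/- (Optimal Weighted Voting Scheme.) Let n ≥ 1, p₁,…,pₙ ∈ (0,1), α ∈ (0,1), and ℓ_a, ℓ_r > 0. For a decision rule f : {-1,1}ⁿ → {-1,1} define the expected collective welfare E(f) := (1-α)(1+ℓ_r) · ∑_{x : f(x)=1} ∏_{i : xᵢ=1} pᵢ ∏_{j : xⱼ=-1} (1-pⱼ) + α(1+ℓ_a) · ∑_{x : f(x)=-1} ∏_{i : xᵢ=-1} pᵢ ∏_{j : xⱼ=1} (1-pⱼ). Set wᵢ := ln(pᵢ/(1-pᵢ)) for each i, w := ∑_{i=1}^n wᵢ, and suppose w ≠ 0; set q̄ := (1/2)·[1 - (ln((1-α)/α) + ln((1+ℓ_r)/(1+ℓ_a)))/w]. Then the weighted majority rule f_{q̄}, defined by f_{q̄}(x) = 1 if ∑_{i=1}^n wᵢ xᵢ ≥ (2q̄-1)·w and f_{q̄}(x) = -1 otherwise, satisfies E(f) ≤ E(f_{q̄}) for every decision rule f : {-1,1}ⁿ → {-1,1}. -/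

import Mathlib

open Finset Real

/-- Expected collective welfare of a decision rule `f` on `{-1,1}ⁿ` (encoded as
integer-valued vote vectors with entries `-1` or `1`), given voting profiles `p`,
prior probability `α` of an invalid block, and losses `ℓa`, `ℓr`:
`E(f) = (1-α)(1+ℓ_r) ∑_{x : f(x)=1} ∏_{i:xᵢ=1} pᵢ ∏_{j:xⱼ=-1}(1-pⱼ)
       + α(1+ℓ_a) ∑_{x : f(x)=-1} ∏_{i:xᵢ=-1} pᵢ ∏_{j:xⱼ=1}(1-pⱼ)`. -/
noncomputable def expectedWelfare (n : ℕ) (p : Fin n → ℝ) (α ℓa ℓr : ℝ)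
    (f : (Fin n → ℤ) → ℤ) : ℝ :=
  (1 - α) * (1 + ℓr) *
      ∑ x ∈ Finset.univ.filter
          (fun x : Fin n → (({-1, 1} : Finset ℤ) : Type) => f (fun i => (x i : ℤ)) = 1),
        ((∏ i ∈ Finset.univ.filter (fun i => (x i : ℤ) = 1), p i) *
          ∏ j ∈ Finset.univ.filter (fun j => (x j : ℤ) = -1), (1 - p j)) +
    α * (1 + ℓa) *
      ∑ x ∈ Finset.univ.filter
          (fun x : Fin n → (({-1, 1} : Finset ℤ) : Type) => f (fun i => (x i : ℤ)) = -1),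
        ((∏ i ∈ Finset.univ.filter (fun i => (x i : ℤ) = -1), p i) *
          ∏ j ∈ Finset.univ.filter (fun j => (x j : ℤ) = 1), (1 - p j))

/-- Optimal Weighted Voting Scheme: with log-odds weights
`wᵢ = ln(pᵢ/(1-pᵢ))`, total weight `w = ∑ wᵢ ≠ 0`, and quota
`q̄ = (1/2)(1 - (ln((1-α)/α) + ln((1+ℓ_r)/(1+ℓ_a)))/w)`, the weighted majority rule
`f_q̄(x) = 1 ↔ ∑ wᵢxᵢ ≥ (2q̄-1)w` maximizes the expected collective welfare over all
decision rules. -/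
theorem stmt4 (n : ℕ) (hn : 1 ≤ n) (p : Fin n → ℝ) (hp : ∀ i, p i ∈ Set.Ioo (0 : ℝ) 1)
    (α : ℝ) (hα : α ∈ Set.Ioo (0 : ℝ) 1) (ℓa ℓr : ℝ) (hℓa : 0 < ℓa) (hℓr : 0 < ℓr)
    (w : Fin n → ℝ) (hw : ∀ i, w i = Real.log (p i / (1 - p i)))
    (W : ℝ) (hW : W = ∑ i, w i) (hW0 : W ≠ 0)
    (qbar : ℝ)
    (hqbar : qbar =
      (1 / 2) * (1 - (Real.log ((1 - α) / α) + Real.log ((1 + ℓr) / (1 + ℓa))) / W))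
    (fq : (Fin n → ℤ) → ℤ)
    (hfq : ∀ x : Fin n → ℤ,
      fq x = if (∑ i, w i * (x i : ℝ)) ≥ (2 * qbar - 1) * W then 1 else -1)
    (f : (Fin n → ℤ) → ℤ) (hf : ∀ x, f x = -1 ∨ f x = 1) :
    expectedWelfare n p α ℓa ℓr f ≤ expectedWelfare n p α ℓa ℓr fq := by
  classical
  have hα0 : 0 < α := hα.1
  have hα1 : 0 < 1 - α := by linarith [hα.2]
  set A := (1 - α) * (1 + ℓr) with hA
  set B := α * (1 + ℓa) with hB
  have hA0 : 0 < A := mul_pos hα1 (by linarith)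
  have hB0 : 0 < B := mul_pos hα0 (by linarith)
  set L := Real.log ((1 - α) / α) + Real.log ((1 + ℓr) / (1 + ℓa)) with hL
  have hlogAB : Real.log A - Real.log B = L := by
    rw [hA, hB, hL, Real.log_mul (by linarith) (by linarith),
      Real.log_mul (by linarith) (by linarith),
      Real.log_div (by linarith) (by linarith),
      Real.log_div (by linarith) (by linarith)]
    ring
  have hthr : (2 * qbar - 1) * W = -L := by
    rw [hqbar]; field_simp; ring
  -- abbreviations
  set P1 : (Fin n → (({-1, 1} : Finset ℤ) : Type)) → ℝ := fun x =>
    (∏ i ∈ Finset.univ.filter (fun i => (x i : ℤ) = 1), p i) *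
      ∏ j ∈ Finset.univ.filter (fun j => (x j : ℤ) = -1), (1 - p j) with hP1
  set P2 : (Fin n → (({-1, 1} : Finset ℤ) : Type)) → ℝ := fun x =>
    (∏ i ∈ Finset.univ.filter (fun i => (x i : ℤ) = -1), p i) *
      ∏ j ∈ Finset.univ.filter (fun j => (x j : ℤ) = 1), (1 - p j) with hP2
  have hx : ∀ (x : Fin n → (({-1, 1} : Finset ℤ) : Type)) (i : Fin n),
      (x i : ℤ) = 1 ∨ (x i : ℤ) = -1 := by
    intro x i
    have := (x i).2
    simp only [Finset.mem_insert, Finset.mem_singleton] at this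
    tauto
  have hP1' : ∀ x, P1 x = ∏ i, (if (x i : ℤ) = 1 then p i else 1 - p i) := by
    intro x
    rw [hP1]
    simp only
    rw [Finset.prod_filter, Finset.prod_filter, ← Finset.prod_mul_distrib]
    refine Finset.prod_congr rfl fun i _ => ?_
    rcases hx x i with h | h <;> simp [h]
  have hP2' : ∀ x, P2 x = ∏ i, (if (x i : ℤ) = 1 then 1 - p i else p i) := by
    intro x
    rw [hP2]
    simp only
    rw [Finset.prod_filter, Finset.prod_filter, ← Finset.prod_mul_distrib]
    refine Finset.prod_congr rfl fun i _ => ?_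
    rcases hx x i with h | h <;> simp [h, mul_comm]
  have hP1pos : ∀ x, 0 < P1 x := by
    intro x; rw [hP1' x]
    exact Finset.prod_pos fun i _ => by
      rcases hx x i with h | h <;> simp [h] <;> linarith [(hp i).1, (hp i).2]
  have hP2pos : ∀ x, 0 < P2 x := by
    intro x; rw [hP2' x]
    exact Finset.prod_pos fun i _ => by
      rcases hx x i with h | h <;> simp [h] <;> linarith [(hp i).1, (hp i).2]
  have hdiff : ∀ x, Real.log (A * P1 x) - Real.log (B * P2 x) =
      (∑ i, w i * ((x i : ℤ) : ℝ)) + L := by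
    intro x
    rw [Real.log_mul (ne_of_gt hA0) (ne_of_gt (hP1pos x)),
        Real.log_mul (ne_of_gt hB0) (ne_of_gt (hP2pos x)),
        hP1' x, hP2' x,
        Real.log_prod (fun i _ => by
          rcases hx x i with h | h <;> simp [h] <;> intro hh <;>
            linarith [(hp i).1, (hp i).2]),
        Real.log_prod (fun i _ => by
          rcases hx x i with h | h <;> simp [h] <;> intro hh <;>
            linarith [(hp i).1, (hp i).2])]
    have : (∑ i, Real.log (if (x i : ℤ) = 1 then p i else 1 - p i)) -
        (∑ i, Real.log (if (x i : ℤ) = 1 then 1 - p i else p i)) =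
        ∑ i, w i * ((x i : ℤ) : ℝ) := by
      rw [← Finset.sum_sub_distrib]
      refine Finset.sum_congr rfl fun i _ => ?_
      have hpi := hp i
      have h1 : (0:ℝ) < p i := hpi.1
      have h2 : (0:ℝ) < 1 - p i := by linarith [hpi.2]
      rcases hx x i with h | h <;>
        simp [h, hw i, Real.log_div (ne_of_gt h1) (ne_of_gt h2)] <;> ring
    linarith [this, hlogAB]
  have key : ∀ x, (B * P2 x ≤ A * P1 x ↔
      (2 * qbar - 1) * W ≤ ∑ i, w i * ((x i : ℤ) : ℝ)) := by
    intro x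
    rw [hthr, ← Real.log_le_log_iff (mul_pos hB0 (hP2pos x)) (mul_pos hA0 (hP1pos x)),
        ← sub_nonneg, hdiff x]
    constructor <;> intro h <;> linarith
  have hEW : ∀ g : (Fin n → ℤ) → ℤ,
      expectedWelfare n p α ℓa ℓr g =
      ∑ x : Fin n → (({-1, 1} : Finset ℤ) : Type),
        ((if g (fun i => (x i : ℤ)) = 1 then A * P1 x else 0) +
         (if g (fun i => (x i : ℤ)) = -1 then B * P2 x else 0)) := by
    intro g
    unfold expectedWelfare
    rw [Finset.mul_sum, Finset.mul_sum, Finset.sum_filter, Finset.sum_filter,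
      ← Finset.sum_add_distrib]
  rw [hEW f, hEW fq]
  refine Finset.sum_le_sum fun x _ => ?_
  have hfq' := hfq (fun i => (x i : ℤ))
  by_cases hc : (∑ i, w i * ((x i : ℤ) : ℝ)) ≥ (2 * qbar - 1) * W
  · rw [if_pos hc] at hfq'
    rw [hfq']
    simp only [if_pos rfl]
    norm_num
    rcases hf (fun i => (x i : ℤ)) with h | h <;> rw [h] <;> norm_num
    exact (key x).mpr hc
  · rw [if_neg hc] at hfq'
    rw [hfq']
    norm_num
    rcases hf (fun i => (x i : ℤ)) with h | h <;> rw [h] <;> norm_num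
    have hlt : (∑ i, w i * ((x i : ℤ) : ℝ)) < (2 * qbar - 1) * W := lt_of_not_ge hc
    by_contra hcon
    push_neg at hcon
    exact absurd ((key x).mp (le_of_lt hcon)) (not_le.mpr hlt)
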